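/- Let f ∈ W^{1,2}(ℝ) ∩ C(ℝ), i.e., f is continuous, locally absolutely continuous, with f and f' in L²(ℝ). Then for any h > 0, (h Σ_{k∈ℤ} |f(hk)|²)^{1/2} ≤ ‖f‖_{L²(ℝ)} + h‖f'‖_{L²(ℝ)}. -/

import Mathlib

open MeasureTheory Filter
open scoped ENNReal NNReal

private lemma memlp_of_summable_sq {ι : Type*} (d : ι → ℝ)
    (hs : Summable fun i => d i ^ 2) : Memℓp d 2 := by
  apply memℓp_gen
  have h2 : ((2 : ℝ≥0∞)).toReal = (2 : ℝ) := by simp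
  rw [h2]
  simpa [Real.rpow_two, Real.norm_eq_abs, sq_abs] using hs

private lemma l2norm_eq {ι : Type*} (x : lp (fun _ : ι => ℝ) 2) :
    ‖x‖ = Real.sqrt (∑' i, (x i) ^ 2) := by
  have h2 : ((2 : ℝ≥0∞)).toReal = (2 : ℝ) := by simp
  rw [lp.norm_eq_tsum_rpow (by rw [h2]; norm_num) x, Real.sqrt_eq_rpow]
  rw [h2]
  simp [Real.rpow_two, Real.norm_eq_abs, sq_abs]

private lemma l2_minkowski {ι : Type*} (b c : ι → ℝ)
    (hsb : Summable fun i => b i ^ 2) (hsc : Summable fun i => c i ^ 2) :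
    Summable (fun i => (b i + c i) ^ 2) ∧
    Real.sqrt (∑' i, (b i + c i) ^ 2) ≤
      Real.sqrt (∑' i, b i ^ 2) + Real.sqrt (∑' i, c i ^ 2) := by
  have hb := memlp_of_summable_sq b hsb
  have hc := memlp_of_summable_sq c hsc
  let B : lp (fun _ : ι => ℝ) 2 := ⟨b, hb⟩
  let C : lp (fun _ : ι => ℝ) 2 := ⟨c, hc⟩
  have hadd : ∀ i, (B + C) i = b i + c i := fun i => rfl
  have hsum : Summable fun i => (b i + c i) ^ 2 := by
    have hm := lp.memℓp (B + C)
    have h2 : ((2 : ℝ≥0∞)).toReal = (2 : ℝ) := by simp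
    rw [memℓp_gen_iff (by rw [h2]; norm_num)] at hm
    rw [h2] at hm
    have : (fun i => ‖(B + C) i‖ ^ (2:ℝ)) = fun i => (b i + c i) ^ 2 := by
      funext i
      rw [hadd i, Real.rpow_two, Real.norm_eq_abs, sq_abs]
    rwa [this] at hm
  refine ⟨hsum, ?_⟩
  have h1 : Real.sqrt (∑' i, (b i + c i) ^ 2) = ‖B + C‖ := by
    rw [l2norm_eq (B + C)]
    congr 1
  have h2 : Real.sqrt (∑' i, b i ^ 2) = ‖B‖ := by rw [l2norm_eq B]
  have h3 : Real.sqrt (∑' i, c i ^ 2) = ‖C‖ := by rw [l2norm_eq C]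
  rw [h1, h2, h3]
  exact norm_add_le B C

theorem stmt10 (f g : ℝ → ℂ) (hc : Continuous f) (hf2 : MemLp f 2 volume)
    (hg2 : MemLp g 2 volume) (hgloc : LocallyIntegrable g volume)
    (hfg : ∀ x : ℝ, f x = f 0 + ∫ t in (0 : ℝ)..x, g t) (h : ℝ) (hh : 0 < h) :
    Summable (fun k : ℤ => ‖f (h * k)‖ ^ 2) ∧
    Real.sqrt (h * ∑' k : ℤ, ‖f (h * k)‖ ^ 2)
      ≤ (∫ x : ℝ, ‖f x‖ ^ 2) ^ (1/2 : ℝ) + h * (∫ x : ℝ, ‖g x‖ ^ 2) ^ (1/2 : ℝ) := by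
  have hsh : (0:ℝ) < Real.sqrt h := Real.sqrt_pos.mpr hh
  have hh2 : Real.sqrt h * Real.sqrt h = h := Real.mul_self_sqrt hh.le
  set I : ℤ → Set ℝ := fun k => Set.Ioc (h * k) (h * k + h) with hIdef
  have hvol : ∀ k : ℤ, volume (I k) = ENNReal.ofReal h := by
    intro k; simp [hIdef, Real.volume_Ioc]
  have hvol' : ∀ k : ℤ, (volume (I k)).toReal = h := fun k => by
    rw [hvol k, ENNReal.toReal_ofReal hh.le]
  have hvolt : ∀ k : ℤ, volume (I k) < ⊤ := fun k => by
    rw [hvol k]; exact ENNReal.ofReal_lt_top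
  have hmeas : ∀ k : ℤ, MeasurableSet (I k) := fun k => measurableSet_Ioc
  -- the intervals cover ℝ
  have hunion : (⋃ k : ℤ, I k) = Set.univ := by
    ext x
    simp only [Set.mem_iUnion, Set.mem_univ, iff_true, hIdef, Set.mem_Ioc]
    refine ⟨⌈x / h⌉ - 1, ?_, ?_⟩
    · push_cast
      have h1 : (⌈x / h⌉ : ℝ) < x / h + 1 := Int.ceil_lt_add_one _
      have h2 := (mul_lt_mul_iff_right₀ hh).mpr (by linarith : ((⌈x / h⌉ : ℤ) : ℝ) - 1 < x / h)
      calc h * (((⌈x / h⌉ : ℤ) : ℝ) - 1) < h * (x / h) := h2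
        _ = x := by field_simp
    · push_cast
      have h1 : x / h ≤ ((⌈x / h⌉ : ℤ) : ℝ) := Int.le_ceil _
      have h2 := (mul_le_mul_iff_right₀ hh).mpr h1
      have hx : h * (x / h) = x := by field_simp
      nlinarith
  have hdisj : Pairwise (Function.onFun Disjoint I) := by
    intro j k hjk
    simp only [Function.onFun, hIdef, Set.Ioc_disjoint_Ioc]
    rcases hjk.lt_or_gt with H | H
    · have hjk' : (j : ℝ) + 1 ≤ k := by exact_mod_cast H
      exact min_le_of_left_le (le_trans (by nlinarith) (le_max_right _ _))
    · have hjk' : (k : ℝ) + 1 ≤ j := by exact_mod_cast H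
      exact min_le_of_right_le (le_trans (by nlinarith) (le_max_left _ _))
  -- global integrability of the squared norms
  have hsqint : ∀ (F : ℝ → ℂ), MemLp F 2 volume → Integrable (fun x => ‖F x‖ ^ 2) volume := by
    intro F hF
    have := hF.integrable_norm_rpow (by norm_num) (by norm_num)
    have h2 : ((2 : ℝ≥0∞)).toReal = (2 : ℝ) := by simp
    rw [h2] at this
    simpa [Real.rpow_two] using this
  have hf2' := hsqint f hf2
  have hg2' := hsqint g hg2
  -- decomposition of the full integrals
  have hsumInt : ∀ (F : ℝ → ℂ), Integrable (fun x => ‖F x‖ ^ 2) volume →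
      HasSum (fun k : ℤ => ∫ x in I k, ‖F x‖ ^ 2) (∫ x : ℝ, ‖F x‖ ^ 2) := by
    intro F hF
    have := hasSum_integral_iUnion (μ := volume) (f := fun x => ‖F x‖ ^ 2) hmeas hdisj
      (by rw [hunion]; exact integrableOn_univ.mpr hF)
    rwa [hunion, Measure.restrict_univ] at this
  have hsumf := hsumInt f hf2'
  have hsumg := hsumInt g hg2'
  have hIntnn : ∀ (F : ℝ → ℂ) (k : ℤ), (0:ℝ) ≤ ∫ x in I k, ‖F x‖ ^ 2 := fun F k =>
    integral_nonneg fun x => sq_nonneg _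
  -- Cauchy-Schwarz on an interval
  have holder : ∀ (k : ℤ) (F : ℝ → ℂ), MemLp F 2 volume →
      ∫ x in I k, ‖F x‖ ≤ Real.sqrt h * Real.sqrt (∫ x in I k, ‖F x‖ ^ 2) := by
    intro k F hF
    haveI : IsFiniteMeasure (volume.restrict (I k)) :=
      ⟨by rw [Measure.restrict_apply_univ]; exact hvolt k⟩
    have hconj : Real.HolderConjugate 2 2 := Real.HolderConjugate.two_two
    have hF2 : MemLp (fun x => ‖F x‖) (ENNReal.ofReal 2) (volume.restrict (I k)) := by
      have := (hF.restrict (I k)).norm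
      have h2 : ENNReal.ofReal (2:ℝ) = (2 : ℝ≥0∞) := by
        rw [ENNReal.ofReal_ofNat]
      rwa [h2]
    have h1 : MemLp (fun _ : ℝ => (1:ℝ)) (ENNReal.ofReal 2) (volume.restrict (I k)) :=
      memLp_const _
    have hHold := integral_mul_le_Lp_mul_Lq_of_nonneg hconj
      (Eventually.of_forall fun x => norm_nonneg _)
      (Eventually.of_forall fun x => zero_le_one) hF2 h1
    simp only [mul_one, Real.one_rpow] at hHold
    rw [setIntegral_const, measureReal_def, hvol' k, smul_eq_mul, mul_one] at hHold
    calc ∫ x in I k, ‖F x‖ ≤ (∫ x in I k, ‖F x‖ ^ (2:ℝ)) ^ (1/2 : ℝ) * h ^ (1/2 : ℝ) := hHold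
      _ = Real.sqrt h * Real.sqrt (∫ x in I k, ‖F x‖ ^ 2) := by
          rw [← Real.sqrt_eq_rpow, ← Real.sqrt_eq_rpow, mul_comm]
          congr 2
          exact integral_congr_ae (Eventually.of_forall fun x => Real.rpow_two _)
  -- integrability on the intervals
  have hgint : ∀ k : ℤ, IntegrableOn g (I k) volume := fun k => by
    have : IntegrableOn g (Set.Icc (h * k) (h * k + h)) volume :=
      hgloc.integrableOn_isCompact isCompact_Icc
    exact this.mono_set Set.Ioc_subset_Icc_self
  have hfint : ∀ k : ℤ, IntegrableOn f (I k) volume := fun k => by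
    have : IntegrableOn f (Set.Icc (h * k) (h * k + h)) volume :=
      (hc.locallyIntegrable).integrableOn_isCompact isCompact_Icc
    exact this.mono_set Set.Ioc_subset_Icc_self
  -- key pointwise estimate
  have key : ∀ k : ℤ, Real.sqrt h * ‖f (h * k)‖ ≤
      Real.sqrt (∫ x in I k, ‖f x‖ ^ 2) + h * Real.sqrt (∫ x in I k, ‖g x‖ ^ 2) := by
    intro k
    set α : ℝ := h * k with hα
    set D : ℝ := ∫ x in I k, ‖g x‖ with hD
    have hDnn : 0 ≤ D := integral_nonneg fun x => norm_nonneg _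
    have hgiv : ∀ y z : ℝ, IntervalIntegrable g volume y z := fun y z =>
      (hgloc.integrableOn_isCompact isCompact_uIcc).intervalIntegrable
    have hptwise : ∀ x ∈ I k, ‖f α‖ ≤ ‖f x‖ + D := by
      intro x hx
      obtain ⟨hx1, hx2⟩ := hx
      have hsub : f x - f α = ∫ t in α..x, g t := by
        rw [hfg x, hfg α]
        rw [← intervalIntegral.integral_interval_sub_left (hgiv 0 x) (hgiv 0 α)]
        ring
      have hnorm1 : ‖f x - f α‖ ≤ ∫ t in α..x, ‖g t‖ := by
        rw [hsub]; exact intervalIntegral.norm_integral_le_integral_norm hx1.le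
      have hnorm2 : (∫ t in α..x, ‖g t‖) ≤ D := by
        rw [intervalIntegral.integral_of_le hx1.le, hD]
        exact setIntegral_mono_set (hgint k).norm
          (Eventually.of_forall fun y => norm_nonneg _)
          (HasSubset.Subset.eventuallyLE (Set.Ioc_subset_Ioc_right hx2))
      calc ‖f α‖ = ‖f x - (f x - f α)‖ := by rw [sub_sub_cancel]
        _ ≤ ‖f x‖ + ‖f x - f α‖ := norm_sub_le _ _
        _ ≤ ‖f x‖ + D := by linarith
    have hconst : IntegrableOn (fun _ : ℝ => D) (I k) volume :=
      (integrableOn_const_iff).mpr (Or.inr (hvolt k))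
    have hconst' : IntegrableOn (fun _ : ℝ => ‖f α‖) (I k) volume :=
      (integrableOn_const_iff).mpr (Or.inr (hvolt k))
    have hint1 : (∫ _x in I k, ‖f α‖) ≤ ∫ x in I k, (‖f x‖ + D) :=
      setIntegral_mono_on hconst' ((hfint k).norm.add hconst) (hmeas k) hptwise
    rw [setIntegral_const, measureReal_def, hvol' k, smul_eq_mul,
      integral_add (hfint k).norm hconst, setIntegral_const, measureReal_def, hvol' k, smul_eq_mul] at hint1
    -- hint1 : h * ‖f α‖ ≤ (∫ x in I k, ‖f x‖) + h * D
    have hfH := holder k f hf2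
    have hgH := holder k g hg2
    have step : Real.sqrt h * (Real.sqrt h * ‖f α‖) ≤
        Real.sqrt h * (Real.sqrt (∫ x in I k, ‖f x‖ ^ 2)
          + h * Real.sqrt (∫ x in I k, ‖g x‖ ^ 2)) := by
      have e1 : Real.sqrt h * (Real.sqrt h * ‖f α‖) = h * ‖f α‖ := by
        rw [← mul_assoc, hh2]
      have e2 : h * D ≤ h * (Real.sqrt h * Real.sqrt (∫ x in I k, ‖g x‖ ^ 2)) :=
        mul_le_mul_of_nonneg_left hgH hh.le
      have e3 : Real.sqrt h * (Real.sqrt (∫ x in I k, ‖f x‖ ^ 2)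
          + h * Real.sqrt (∫ x in I k, ‖g x‖ ^ 2))
          = Real.sqrt h * Real.sqrt (∫ x in I k, ‖f x‖ ^ 2)
            + h * (Real.sqrt h * Real.sqrt (∫ x in I k, ‖g x‖ ^ 2)) := by ring
      rw [e1, e3]
      linarith
    exact le_of_mul_le_mul_left step hsh
  -- assemble via Minkowski in ℓ²
  have hsumb : Summable fun k : ℤ => Real.sqrt (∫ x in I k, ‖f x‖ ^ 2) ^ 2 := by
    have : (fun k : ℤ => Real.sqrt (∫ x in I k, ‖f x‖ ^ 2) ^ 2)
        = fun k : ℤ => ∫ x in I k, ‖f x‖ ^ 2 := by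
      funext k; exact Real.sq_sqrt (hIntnn f k)
    rw [this]; exact hsumf.summable
  have hsumc : Summable fun k : ℤ => Real.sqrt (∫ x in I k, ‖g x‖ ^ 2) ^ 2 := by
    have : (fun k : ℤ => Real.sqrt (∫ x in I k, ‖g x‖ ^ 2) ^ 2)
        = fun k : ℤ => ∫ x in I k, ‖g x‖ ^ 2 := by
      funext k; exact Real.sq_sqrt (hIntnn g k)
    rw [this]; exact hsumg.summable
  have hsumc' : Summable fun k : ℤ => (h * Real.sqrt (∫ x in I k, ‖g x‖ ^ 2)) ^ 2 := by
    have : (fun k : ℤ => (h * Real.sqrt (∫ x in I k, ‖g x‖ ^ 2)) ^ 2)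
        = fun k : ℤ => h ^ 2 * Real.sqrt (∫ x in I k, ‖g x‖ ^ 2) ^ 2 := by
      funext k; ring
    rw [this]; exact hsumc.mul_left _
  obtain ⟨hminkS, hminkI⟩ := l2_minkowski
    (fun k : ℤ => Real.sqrt (∫ x in I k, ‖f x‖ ^ 2))
    (fun k : ℤ => h * Real.sqrt (∫ x in I k, ‖g x‖ ^ 2)) hsumb hsumc'
  have hannn : ∀ k : ℤ, (0:ℝ) ≤ Real.sqrt h * ‖f (h * k)‖ := fun k =>
    mul_nonneg hsh.le (norm_nonneg _)
  have hsumA : Summable fun k : ℤ => (Real.sqrt h * ‖f (h * k)‖) ^ 2 :=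
    Summable.of_nonneg_of_le (fun k => sq_nonneg _)
      (fun k => pow_le_pow_left₀ (hannn k) (key k) 2) hminkS
  have hAeq : (fun k : ℤ => (Real.sqrt h * ‖f (h * k)‖) ^ 2)
      = fun k : ℤ => h * ‖f (h * k)‖ ^ 2 := by
    funext k
    rw [mul_pow, Real.sq_sqrt hh.le]
  have hsummable : Summable fun k : ℤ => ‖f (h * k)‖ ^ 2 := by
    rw [hAeq] at hsumA
    exact (summable_mul_left_iff hh.ne').mp hsumA
  refine ⟨hsummable, ?_⟩
  have htsum1 : h * ∑' k : ℤ, ‖f (h * k)‖ ^ 2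
      = ∑' k : ℤ, (Real.sqrt h * ‖f (h * k)‖) ^ 2 := by
    rw [hAeq, tsum_mul_left]
  have hstep1 : Real.sqrt (h * ∑' k : ℤ, ‖f (h * k)‖ ^ 2)
      ≤ Real.sqrt (∑' k : ℤ, (Real.sqrt (∫ x in I k, ‖f x‖ ^ 2)
          + h * Real.sqrt (∫ x in I k, ‖g x‖ ^ 2)) ^ 2) := by
    rw [htsum1]
    exact Real.sqrt_le_sqrt (Summable.tsum_le_tsum
      (fun k => pow_le_pow_left₀ (hannn k) (key k) 2) hsumA hminkS)
  have hstep2 := hminkI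
  have hb_eq : Real.sqrt (∑' k : ℤ, Real.sqrt (∫ x in I k, ‖f x‖ ^ 2) ^ 2)
      = (∫ x : ℝ, ‖f x‖ ^ 2) ^ (1/2 : ℝ) := by
    have : (∑' k : ℤ, Real.sqrt (∫ x in I k, ‖f x‖ ^ 2) ^ 2) = ∫ x : ℝ, ‖f x‖ ^ 2 := by
      have e : (fun k : ℤ => Real.sqrt (∫ x in I k, ‖f x‖ ^ 2) ^ 2)
          = fun k : ℤ => ∫ x in I k, ‖f x‖ ^ 2 := by
        funext k; exact Real.sq_sqrt (hIntnn f k)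
      rw [e]; exact hsumf.tsum_eq
    rw [this, Real.sqrt_eq_rpow]
  have hc_eq : Real.sqrt (∑' k : ℤ, (h * Real.sqrt (∫ x in I k, ‖g x‖ ^ 2)) ^ 2)
      = h * (∫ x : ℝ, ‖g x‖ ^ 2) ^ (1/2 : ℝ) := by
    have e1 : (∑' k : ℤ, (h * Real.sqrt (∫ x in I k, ‖g x‖ ^ 2)) ^ 2)
        = h ^ 2 * ∫ x : ℝ, ‖g x‖ ^ 2 := by
      have e : (fun k : ℤ => (h * Real.sqrt (∫ x in I k, ‖g x‖ ^ 2)) ^ 2)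
          = fun k : ℤ => h ^ 2 * (∫ x in I k, ‖g x‖ ^ 2) := by
        funext k; rw [mul_pow, Real.sq_sqrt (hIntnn g k)]
      rw [e, tsum_mul_left, hsumg.tsum_eq]
    rw [e1, Real.sqrt_mul (sq_nonneg h), Real.sqrt_sq hh.le, Real.sqrt_eq_rpow]
  calc Real.sqrt (h * ∑' k : ℤ, ‖f (h * k)‖ ^ 2)
      ≤ Real.sqrt (∑' k : ℤ, (Real.sqrt (∫ x in I k, ‖f x‖ ^ 2)
          + h * Real.sqrt (∫ x in I k, ‖g x‖ ^ 2)) ^ 2) := hstep1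
    _ ≤ Real.sqrt (∑' k : ℤ, Real.sqrt (∫ x in I k, ‖f x‖ ^ 2) ^ 2)
        + Real.sqrt (∑' k : ℤ, (h * Real.sqrt (∫ x in I k, ‖g x‖ ^ 2)) ^ 2) := hstep2
    _ = (∫ x : ℝ, ‖f x‖ ^ 2) ^ (1/2 : ℝ) + h * (∫ x : ℝ, ‖g x‖ ^ 2) ^ (1/2 : ℝ) := by
        rw [hb_eq, hc_eq]
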